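/- Let G be a finite tree (a simple connected acyclic undirected graph) with at least 2 nodes. Then for the majority game on G, the set of all leaf nodes (nodes of degree 1) is a sufficient control set. -/

import Mathlib

open Finset

/-- The indicator strategy profile `𝟙_S` of a set of players `S`: action `1` (here `true`)
on `S` and `0` (here `false`) elsewhere. -/
def indicator {V : Type*} [DecidableEq V] (S : Finset V) : V → Bool :=
  fun i => decide (i ∈ S)

/-- A finite binary-action game with utilities `u` is super-modular (has increasing
differences) if for every player `i` and profiles `x, y` with `x_{-i} ≥ y_{-i}`
componentwise, `u_i(1, x_{-i}) − u_i(0, x_{-i}) ≥ u_i(1, y_{-i}) − u_i(0, y_{-i})`. -/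
def Supermodular {V : Type*} [DecidableEq V] (u : V → (V → Bool) → ℝ) : Prop :=
  ∀ (i : V) (x y : V → Bool), (∀ j, j ≠ i → y j ≤ x j) →
    u i (Function.update y i true) - u i (Function.update y i false) ≤
      u i (Function.update x i true) - u i (Function.update x i false)

/-- An improvement path from `S` to `T`: a sequence of profiles starting at `𝟙_S` and ending
at `𝟙_T` such that at each step some player `i ∉ S` flips her action (the profile changes
exactly in coordinate `i`) without decreasing her utility. -/
def IsImprovementPath {V : Type*} [Fintype V] [DecidableEq V]
    (u : V → (V → Bool) → ℝ) (S T : Finset V) : Prop :=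
  ∃ (m : ℕ) (x : ℕ → V → Bool),
    x 0 = indicator S ∧ x m = indicator T ∧
    ∀ k < m, ∃ i, i ∉ S ∧
      x (k + 1) = Function.update (x k) i (!(x k i)) ∧
      u i (x k) ≤ u i (x (k + 1))

/-- `S` is a sufficient control set if there is an improvement path from `S` to the whole
player set `V`. -/
def SufficientControlSet {V : Type*} [Fintype V] [DecidableEq V]
    (u : V → (V → Bool) → ℝ) (S : Finset V) : Prop :=
  IsImprovementPath u S Finset.univ

/-- Utilities of the majority game on a finite simple undirected graph `G`: the utility of
player `i` at profile `x` is the number of neighbors `j` of `i` with `x_j = x_i`. -/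
def majU {V : Type*} [Fintype V] [DecidableEq V] (G : SimpleGraph V) [DecidableRel G.Adj] :
    V → (V → Bool) → ℝ :=
  fun i x => ((G.neighborFinset i).filter (fun j => x j = x i)).card

lemma unique_shallow_nbr {V : Type*} {G : SimpleGraph V} (htree : G.IsTree) (r v : V)
    {u₁ u₂ : V} (h₁ : G.Adj v u₁) (h₂ : G.Adj v u₂)
    (d₁ : G.dist r u₁ ≤ G.dist r v) (d₂ : G.dist r u₂ ≤ G.dist r v) : u₁ = u₂ := by
  classical
  have hconn := htree.isConnected
  have key : ∀ (u : V) (h : G.Adj v u), G.dist r u ≤ G.dist r v →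
      ∃ p : G.Walk r u, (p.concat h.symm).IsPath := by
    intro u h hd
    obtain ⟨p, hp, hlen⟩ := hconn.exists_path_of_dist r u
    have hvs : v ∉ p.support := by
      intro hv
      have ht1 : G.dist r v ≤ (p.takeUntil v hv).length := SimpleGraph.dist_le _
      have ht2 : G.dist v u ≤ (p.dropUntil v hv).length := SimpleGraph.dist_le _
      have ht3 : (p.takeUntil v hv).length + (p.dropUntil v hv).length = p.length := by
        rw [← SimpleGraph.Walk.length_append, SimpleGraph.Walk.take_spec]
      have hne : G.dist v u ≠ 0 :=
        SimpleGraph.dist_ne_zero_iff_ne_and_reachable.mpr ⟨h.ne, ⟨h.toWalk⟩⟩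
      omega
    refine ⟨p, ?_⟩
    rw [← SimpleGraph.Walk.isPath_reverse_iff, SimpleGraph.Walk.reverse_concat]
    exact SimpleGraph.Walk.IsPath.cons (hp.reverse) (by
      rwa [SimpleGraph.Walk.support_reverse, List.mem_reverse])
  obtain ⟨p₁, hp₁⟩ := key u₁ h₁ d₁
  obtain ⟨p₂, hp₂⟩ := key u₂ h₂ d₂
  obtain ⟨q, -, huniq⟩ := htree.existsUnique_path r v
  have e : p₁.concat h₁.symm = p₂.concat h₂.symm := by
    rw [huniq _ hp₁, huniq _ hp₂]
  have hs := congrArg (fun w => SimpleGraph.Walk.support (SimpleGraph.Walk.reverse w)) e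
  simp only [SimpleGraph.Walk.reverse_concat, SimpleGraph.Walk.support_cons] at hs
  rw [p₁.reverse.support_eq_cons, p₂.reverse.support_eq_cons] at hs
  simp only [List.cons.injEq] at hs
  exact hs.2.1


/-- For the majority game on a finite tree (a simple connected acyclic undirected graph)
with at least two nodes, the set of all leaf nodes (nodes of degree `1`) is a sufficient
control set. -/
theorem tree_leaves_sufficient
    {V : Type*} [Fintype V] [DecidableEq V]
    (G : SimpleGraph V) [DecidableRel G.Adj]
    (htree : G.IsTree) (hcard : 2 ≤ Fintype.card V) :
    SufficientControlSet (majU G) (Finset.univ.filter fun v => G.degree v = 1) := by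
  classical
  have hconn := htree.isConnected
  obtain ⟨r⟩ : Nonempty V := Fintype.card_pos_iff.mp (by omega)
  have hdegpos : ∀ v : V, 0 < G.degree v := by
    intro v
    rw [SimpleGraph.degree_pos_iff_exists_adj]
    obtain ⟨w, hw⟩ := Fintype.exists_ne_of_one_lt_card (by omega) v
    obtain ⟨p⟩ := hconn.preconnected v w
    cases p with
    | nil => exact absurd rfl hw
    | cons h _ => exact ⟨_, h⟩
  set S : Finset V := univ.filter (fun v => G.degree v = 1) with hS
  set le : V → V → Bool := fun a b => decide (G.dist r b ≤ G.dist r a) with hle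
  set l : List V := ((univ.filter (fun v => ¬ G.degree v = 1)).toList).mergeSort le with hl
  have hmem_l : ∀ j : V, j ∈ l ↔ ¬ G.degree j = 1 := by
    intro j
    rw [hl, List.mem_mergeSort, Finset.mem_toList, Finset.mem_filter]
    simp
  have hnodup : l.Nodup :=
    (List.mergeSort_perm _ le).nodup_iff.mpr (Finset.nodup_toList _)
  have hsorted : l.Pairwise (fun a b => G.dist r b ≤ G.dist r a) := by
    have h := List.pairwise_mergeSort (le := le)
      (fun a b c hab hbc => by
        simp only [hle, decide_eq_true_eq] at hab hbc ⊢; omega)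
      (fun a b => by
        simp only [hle, Bool.or_eq_true, decide_eq_true_eq]; omega)
      ((univ.filter (fun v => ¬ G.degree v = 1)).toList)
    rw [← hl] at h
    exact h.imp (fun hab => by simpa [hle] using hab)
  set x : ℕ → V → Bool := fun k j => decide (j ∈ S ∨ j ∈ l.take k) with hx
  refine ⟨l.length, x, ?_, ?_, ?_⟩
  · funext j; simp [indicator, hx]
  · funext j
    simp only [indicator, hx, List.take_length]
    rw [decide_eq_decide]
    refine iff_of_true ?_ (Finset.mem_univ j)
    by_cases hj : G.degree j = 1
    · exact Or.inl (by simp [hS, hj])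
    · exact Or.inr ((hmem_l j).mpr hj)
  · intro k hk
    set i := l[k] with hi
    have himem : i ∈ l := List.getElem_mem hk
    have hideg : ¬ G.degree i = 1 := (hmem_l i).mp himem
    have hinotS : i ∉ S := by simp [hS, hideg]
    have hinottake : i ∉ l.take k := by
      intro hmem
      obtain ⟨idx, hidx, heq⟩ := List.mem_iff_getElem.mp hmem
      have hidx' : idx < k := by
        have := List.length_take (i := k) (l := l); omega
      rw [List.getElem_take] at heq
      have : idx = k := (List.Nodup.getElem_inj_iff hnodup).mp (heq.trans hi)
      omega
    have hxki : x k i = false := by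
      simp [hx, hinotS, hinottake]
    have hitake : i ∈ l.take (k + 1) := by
      refine List.mem_iff_getElem.mpr ⟨k, ?_, ?_⟩
      · rw [List.length_take]; omega
      · rw [List.getElem_take]
    have htake1 : ∀ j : V, j ∈ l.take (k + 1) ↔ j ∈ l.take k ∨ j = i := by
      intro j
      rw [List.take_succ, List.getElem?_eq_getElem hk, ← hi]
      simp
    have hxsucc_i : x (k + 1) i = true := by
      simp [hx, hitake]
    have hxsucc_ne : ∀ j : V, j ≠ i → x (k + 1) j = x k j := by
      intro j hji
      simp only [hx]
      rw [decide_eq_decide]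
      rw [htake1 j]
      tauto
    refine ⟨i, hinotS, ?_, ?_⟩
    · funext j
      by_cases hji : j = i
      · subst hji
        rw [Function.update_self, hxki, hxsucc_i]
        rfl
      · rw [Function.update_of_ne hji, hxsucc_ne j hji]
    · -- utility inequality
      set N := G.neighborFinset i with hN
      set A := N.filter (fun j => x k j = false) with hA
      set B := N.filter (fun j => x k j = true) with hB
      have hadj : ∀ j ∈ N, G.Adj i j := by
        intro j hj
        rwa [hN, SimpleGraph.mem_neighborFinset] at hj
      have hAB : A.card + B.card = G.degree i := by
        rw [hA, hB, ← SimpleGraph.card_neighborFinset_eq_degree, ← hN]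
        have h2 : N.filter (fun j => x k j = true)
            = N.filter (fun j => ¬ x k j = false) := by
          refine Finset.filter_congr (fun j _ => ?_)
          simp
        rw [h2]
        exact Finset.card_filter_add_card_filter_not _
      have hA1 : A.card ≤ 1 := by
        rw [Finset.card_le_one]
        have key : ∀ c ∈ A, G.Adj i c ∧ G.dist r c ≤ G.dist r i := by
          intro c hc
          rw [hA, Finset.mem_filter] at hc
          obtain ⟨hcN, hcx⟩ := hc
          have hcadj := hadj c hcN
          simp only [hx, decide_eq_false_iff_not, not_or] at hcx
          obtain ⟨hcS, hctake⟩ := hcx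
          refine ⟨hcadj, ?_⟩
          by_contra hgt
          push_neg at hgt
          have hcdeg : ¬ G.degree c = 1 := by
            intro hc1
            exact hcS (by simp [hS, hc1])
          obtain ⟨idx, hidxlt, hidxeq⟩ := List.mem_iff_getElem.mp ((hmem_l c).mpr hcdeg)
          rcases lt_trichotomy idx k with h' | h' | h'
          · refine hctake (List.mem_iff_getElem.mpr ⟨idx, ?_, ?_⟩)
            · rw [List.length_take]; omega
            · rw [List.getElem_take]; exact hidxeq
          · simp only [h'] at hidxeq
            have hceqi : c = i := hidxeq.symm.trans hi.symm
            rw [hceqi] at hgt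
            omega
          · have hp := List.pairwise_iff_get.mp hsorted ⟨k, hk⟩ ⟨idx, hidxlt⟩
              (Fin.mk_lt_mk.mpr h')
            simp only [List.get_eq_getElem] at hp
            rw [hidxeq, ← hi] at hp
            omega
        intro a ha b hb
        obtain ⟨haadj, hadist⟩ := key a ha
        obtain ⟨hbadj, hbdist⟩ := key b hb
        exact unique_shallow_nbr htree r i haadj hbadj hadist hbdist
      have hdeg2 : 2 ≤ G.degree i := by
        have := hdegpos i; omega
      have e1 : N.filter (fun j => x k j = x k i) = A := by
        rw [hA]
        exact Finset.filter_congr (fun j _ => by rw [hxki])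
      have e2 : N.filter (fun j => x (k + 1) j = x (k + 1) i) = B := by
        rw [hB]
        refine Finset.filter_congr (fun j hj => ?_)
        have hji : j ≠ i := by
          rintro rfl
          exact (G.notMem_neighborFinset_self i) (hN ▸ hj)
        rw [hxsucc_i, hxsucc_ne j hji]
      show majU G i (x k) ≤ majU G i (x (k + 1))
      unfold majU
      rw [← hN, e1, e2]
      have : A.card ≤ B.card := by omega
      exact_mod_cast this
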